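/- Cauchy-type identity for single-row Grothendieck polynomials: for every integer ℓ ≥ 1 one has Σ_{i,j ≥ 0, i+j = ℓ} (-1)^j e_i(z) G_j(z) = Σ_{m=ℓ+1}^{k} (-1)^{m-ℓ-1} e_m(z) (that is, the left-hand side equals e_{ℓ+1}(z) − e_{ℓ+2}(z) + e_{ℓ+3}(z) − ⋯ ± e_k(z)) in ℤ[z_1,…,z_k]. -/

import Mathlib

open Finset MvPolynomial

noncomputable section

/-- The elementary symmetric polynomial `e_r` of a family of ring elements
(`e_0 = 1`, `e_r = 0` for `r` larger than the number of elements). -/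
def esymmF {R : Type*} [CommRing R] {m : ℕ} (f : Fin m → R) (r : ℕ) : R :=
  ∑ t ∈ Finset.powersetCard r Finset.univ, ∏ j ∈ t, f j

/-- The complete homogeneous symmetric polynomial `h_r` of a family of ring
elements: the sum of all monomials of degree `r` (`h_0 = 1`). -/
def hsymmF {R : Type*} [CommRing R] {m : ℕ} (f : Fin m → R) (r : ℕ) : R :=
  ∑ μ : Sym (Fin m) r, (μ.1.map f).prod

/-- `e_r(z)` in `ℤ[z_1,…,z_k]`. -/
def eP (k : ℕ) (r : ℕ) : MvPolynomial (Fin k) ℤ :=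
  esymmF (fun i => X i) r

/-- `h_r(z)` in `ℤ[z_1,…,z_k]`. -/
def hP (k : ℕ) (r : ℕ) : MvPolynomial (Fin k) ℤ :=
  hsymmF (fun i => X i) r

/-- The single-row Grothendieck polynomial
`G_j(z) = Σ_{a,b ≥ 0, a+b ≤ k} (-1)^b h_{j+a}(z) e_b(z)`. -/
def GP (k : ℕ) (j : ℕ) : MvPolynomial (Fin k) ℤ :=
  ∑ a ∈ Finset.range (k + 1), ∑ b ∈ Finset.range (k + 1 - a),
    (-1) ^ b * hP k (j + a) * eP k b

variable {R : Type*} [CommRing R]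

lemma esymmF_eq_multiset {m : ℕ} (f : Fin m → R) (r : ℕ) :
    esymmF f r = ((Finset.univ.val.map f).esymm r) := by
  rw [Finset.esymm_map_val]; rfl

lemma multiset_esymm_cons (a : R) (s : Multiset R) (n : ℕ) :
    (a ::ₘ s).esymm (n+1) = s.esymm (n+1) + a * s.esymm n := by
  simp [Multiset.esymm, Multiset.powersetCard_cons, Multiset.map_map, Function.comp,
    Multiset.sum_map_mul_left]

lemma univ_val_map_succ {m : ℕ} (f : Fin (m+1) → R) :
    (Finset.univ : Finset (Fin (m+1))).val.map f
      = f 0 ::ₘ ((Finset.univ : Finset (Fin m)).val.map (f ∘ Fin.succ)) := by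
  rw [Fin.univ_succ]
  simp only [Finset.cons_val, Multiset.map_cons, Finset.map_val, Multiset.map_map]
  rfl

lemma esymmF_succ {m : ℕ} (f : Fin (m+1) → R) (i : ℕ) :
    esymmF f (i+1) = esymmF (f ∘ Fin.succ) (i+1) + f 0 * esymmF (f ∘ Fin.succ) i := by
  rw [esymmF_eq_multiset, esymmF_eq_multiset, esymmF_eq_multiset, univ_val_map_succ,
    multiset_esymm_cons]

lemma esymmF_zero {m : ℕ} (f : Fin m → R) : esymmF f 0 = 1 := by
  simp [esymmF]

lemma esymmF_eq_zero {m : ℕ} (f : Fin m → R) (r : ℕ) (h : m < r) : esymmF f r = 0 := by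
  rw [esymmF, Finset.powersetCard_eq_empty.mpr (by simpa using h)]
  simp

lemma hsymmF_zero {m : ℕ} (f : Fin m → R) : hsymmF f 0 = 1 := by
  have h0 : ((default : Sym (Fin m) 0) : Multiset (Fin m)) = 0 :=
    Multiset.card_eq_zero.mp (default : Sym (Fin m) 0).2
  simp [hsymmF, h0]

lemma hsymmF_fin_zero (f : Fin 0 → R) (j : ℕ) : hsymmF f (j+1) = 0 := by
  rw [hsymmF, Finset.univ_eq_empty, Finset.sum_empty]

lemma hsymmF_fin_one (f : Fin 1 → R) (n : ℕ) : hsymmF f n = f 0 ^ n := by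
  have h1 : ∀ μ : Sym (Fin 1) n, (μ.1.map f).prod = f 0 ^ n := by
    intro μ
    have h2 : μ.1.map f = Multiset.replicate n (f 0) := by
      rw [Multiset.eq_replicate]
      constructor
      · simp [μ.2]
      · intro b hb
        rcases Multiset.mem_map.mp hb with ⟨x, _, rfl⟩
        congr 1
        exact Subsingleton.elim x 0
    rw [h2, Multiset.prod_replicate]
  rw [hsymmF, Finset.sum_congr rfl (fun μ _ => h1 μ), Finset.sum_const, Finset.card_univ,
    Sym.card_sym_eq_multichoose]
  simp [Nat.multichoose_one]

lemma hsymmF_succ {m : ℕ} (f : Fin (m+1) → R) (j : ℕ) :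
    hsymmF f (j+1) = hsymmF (f ∘ Fin.succ) (j+1) + f 0 * hsymmF f j := by
  cases m with
  | zero =>
      rw [hsymmF_fin_one, hsymmF_fin_one, hsymmF_fin_zero]
      rw [pow_succ, zero_add, mul_comm]
  | succ m =>
      classical
      show (∑ μ : Sym (Fin (m+2)) (j+1), (μ.1.map f).prod)
        = ∑ ν : Sym (Fin (m+1)) (j+1), (ν.1.map (f ∘ Fin.succ)).prod
          + f 0 * ∑ μ : Sym (Fin (m+2)) j, (μ.1.map f).prod
      rw [← Fintype.sum_subtype_add_sum_subtype
        (fun μ : Sym (Fin (m+2)) (j+1) => (0 : Fin (m+2)) ∈ μ) (fun μ => (μ.1.map f).prod)]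
      rw [add_comm]
      congr 1
      · refine Eq.symm (Fintype.sum_equiv Sym.e2.symm
          (fun ν => ((ν : Sym (Fin (m+1)) (j+1)).1.map (f ∘ Fin.succ)).prod)
          (fun i => ((i.1 : Sym (Fin (m+2)) (j+1)).1.map f).prod) ?_)
        intro ν
        show _ = ((Sym.map (Fin.succAbove 0) ν).1.map f).prod
        rw [show (Sym.map (Fin.succAbove 0) ν).1 = Multiset.map (Fin.succAbove 0) ν.1 from by exact Sym.coe_map .., Multiset.map_map]
        refine congrArg _ (Multiset.map_congr rfl fun x _ => ?_)
        simp [Fin.succAbove_zero]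
      · rw [Finset.mul_sum]
        refine Eq.symm (Fintype.sum_equiv Sym.e1.symm
          (fun ν => f 0 * ((ν : Sym (Fin (m+2)) j).1.map f).prod)
          (fun i => ((i.1 : Sym (Fin (m+2)) (j+1)).1.map f).prod) ?_)
        intro ν
        show _ = (((0 ::ₛ ν) : Sym (Fin (m+2)) (j+1)).1.map f).prod
        rw [show ((0 ::ₛ ν) : Sym (Fin (m+2)) (j+1)).1 = 0 ::ₘ ν.1 from by exact Sym.coe_cons .., Multiset.map_cons, Multiset.prod_cons]

lemma eh_vanish : ∀ (m : ℕ) (f : Fin m → R) (n : ℕ),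
    ∑ p ∈ Finset.HasAntidiagonal.antidiagonal (n+1), (-1 : R) ^ p.1 * esymmF f p.1 * hsymmF f p.2 = 0 := by
  intro m
  induction m with
  | zero =>
      intro f n
      apply Finset.sum_eq_zero
      rintro ⟨i, j⟩ hp
      rw [Finset.HasAntidiagonal.mem_antidiagonal] at hp
      match i, j, hp with
      | 0, j, hp =>
          obtain rfl : j = n + 1 := by omega
          simp [hsymmF_fin_zero]
      | (i+1), j, hp =>
          simp [esymmF_eq_zero f (i+1) (Nat.succ_pos i)]
  | succ m IH =>
      intro f n
      have hA2 : ∑ p ∈ Finset.HasAntidiagonal.antidiagonal (n+1),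
          (-1 : R) ^ p.1 * esymmF (f ∘ Fin.succ) p.1 * hsymmF f p.2
          = f 0 * ∑ p ∈ Finset.HasAntidiagonal.antidiagonal n,
              (-1 : R) ^ p.1 * esymmF (f ∘ Fin.succ) p.1 * hsymmF f p.2 := by
        rw [Finset.Nat.sum_antidiagonal_succ']
        have step : ∀ p ∈ Finset.HasAntidiagonal.antidiagonal n,
            (-1 : R) ^ p.1 * esymmF (f ∘ Fin.succ) p.1 * hsymmF f (p.2+1)
            = (-1 : R) ^ p.1 * esymmF (f ∘ Fin.succ) p.1 * hsymmF (f ∘ Fin.succ) (p.2+1)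
              + f 0 * ((-1 : R) ^ p.1 * esymmF (f ∘ Fin.succ) p.1 * hsymmF f p.2) := by
          intro p _
          rw [hsymmF_succ]
          ring
        rw [Finset.sum_congr rfl step, Finset.sum_add_distrib, ← Finset.mul_sum]
        have hIH : (-1 : R) ^ (n+1) * esymmF (f ∘ Fin.succ) (n+1) * hsymmF f 0
            + ∑ p ∈ Finset.HasAntidiagonal.antidiagonal n,
              (-1 : R) ^ p.1 * esymmF (f ∘ Fin.succ) p.1 * hsymmF (f ∘ Fin.succ) (p.2+1)
            = 0 := by
          have := IH (f ∘ Fin.succ) n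
          rw [Finset.Nat.sum_antidiagonal_succ'] at this
          rw [hsymmF_zero]
          rw [hsymmF_zero (f ∘ Fin.succ)] at this
          exact this
        rw [← add_assoc, hIH, zero_add]
      rw [Finset.Nat.sum_antidiagonal_succ]
      have step : ∀ p ∈ Finset.HasAntidiagonal.antidiagonal n,
          (-1 : R) ^ (p.1+1) * esymmF f (p.1+1) * hsymmF f p.2
          = (-1 : R) ^ (p.1+1) * esymmF (f ∘ Fin.succ) (p.1+1) * hsymmF f p.2
            + (-(f 0)) * ((-1 : R) ^ p.1 * esymmF (f ∘ Fin.succ) p.1 * hsymmF f p.2) := by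
        intro p _
        rw [esymmF_succ]
        ring
      rw [Finset.sum_congr rfl step, Finset.sum_add_distrib, ← Finset.mul_sum]
      have hA1 : (-1 : R) ^ (0:ℕ) * esymmF f 0 * hsymmF f (n+1)
          + ∑ p ∈ Finset.HasAntidiagonal.antidiagonal n,
            (-1 : R) ^ (p.1+1) * esymmF (f ∘ Fin.succ) (p.1+1) * hsymmF f p.2
          = ∑ p ∈ Finset.HasAntidiagonal.antidiagonal (n+1),
            (-1 : R) ^ p.1 * esymmF (f ∘ Fin.succ) p.1 * hsymmF f p.2 := by
        rw [Finset.Nat.sum_antidiagonal_succ]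
        rw [esymmF_zero, esymmF_zero]
      rw [← add_assoc, hA1, hA2]
      ring

lemma eh_vanish' (m : ℕ) (f : Fin m → R) (n : ℕ) :
    ∑ p ∈ Finset.HasAntidiagonal.antidiagonal (n+1), (-1 : R) ^ p.2 * esymmF f p.2 * hsymmF f p.1 = 0 := by
  have := Finset.Nat.sum_antidiagonal_swap
    (f := fun q : ℕ × ℕ => (-1 : R) ^ q.1 * esymmF f q.1 * hsymmF f q.2) (n := n+1)
  simp only [Prod.fst_swap, Prod.snd_swap] at this
  rw [this]
  exact eh_vanish m f n

lemma tri_sum {M : Type*} [AddCommMonoid M] (g : ℕ → ℕ → M) :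
    ∀ N : ℕ, ∑ b ∈ Finset.range (N+1), ∑ s ∈ Finset.range (N+1-b), g b s
      = ∑ n ∈ Finset.range (N+1), ∑ p ∈ Finset.HasAntidiagonal.antidiagonal n, g p.1 p.2 := by
  intro N
  induction N with
  | zero => simp
  | succ N IH =>
      have step : ∀ b ∈ Finset.range (N+2), ∑ s ∈ Finset.range (N+2-b), g b s
          = (∑ s ∈ Finset.range (N+1-b), g b s) + g b (N+1-b) := by
        intro b hb
        rw [Finset.mem_range] at hb
        have : N+2-b = (N+1-b)+1 := by omega
        rw [this, Finset.sum_range_succ]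
      rw [Finset.sum_congr rfl step, Finset.sum_add_distrib]
      rw [Finset.sum_range_succ (fun b => ∑ s ∈ Finset.range (N+1-b), g b s) (N+1)]
      have hz : ∑ s ∈ Finset.range (N+1-(N+1)), g (N+1) s = 0 := by simp
      rw [hz, add_zero, IH]
      rw [Finset.sum_range_succ (fun n => ∑ p ∈ Finset.HasAntidiagonal.antidiagonal n, g p.1 p.2) (N+1)]
      congr 1
      rw [Finset.Nat.sum_antidiagonal_eq_sum_range_succ_mk (fun p => g p.1 p.2) (N+1)]

lemma Dval (m : ℕ) (f : Fin m → R) (N : ℕ) :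
    ∑ s ∈ Finset.range (N+1), ∑ b ∈ Finset.range (N+1-s),
      (-1 : R) ^ b * esymmF f b * hsymmF f s = 1 := by
  rw [tri_sum (fun s b => (-1 : R) ^ b * esymmF f b * hsymmF f s) N]
  rw [Finset.sum_eq_single 0]
  · simp [esymmF_zero, hsymmF_zero]
  · intro n _ hn
    obtain ⟨n', rfl⟩ := Nat.exists_eq_succ_of_ne_zero hn
    exact eh_vanish' m f n'
  · intro h
    exact absurd (Finset.mem_range.mpr (Nat.succ_pos N)) h


lemma Fval (m : ℕ) (f : Fin m → R) :
    ∀ (a n : ℕ), 1 ≤ n →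
      ∑ p ∈ Finset.HasAntidiagonal.antidiagonal n, (-1 : R) ^ p.2 * esymmF f p.1 * hsymmF f (p.2+a)
      = ∑ t ∈ Finset.range a, (-1 : R) ^ t * esymmF f (n+1+t) * hsymmF f (a-1-t) := by
  intro a
  induction a with
  | zero =>
      intro n hn
      obtain ⟨n', rfl⟩ : ∃ n', n = n' + 1 := ⟨n - 1, by omega⟩
      rw [Finset.range_zero, Finset.sum_empty]
      have key : ∀ p ∈ Finset.HasAntidiagonal.antidiagonal (n'+1),
          (-1 : R) ^ p.2 * esymmF f p.1 * hsymmF f (p.2+0)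
          = (-1 : R) ^ (n'+1) * ((-1 : R) ^ p.1 * esymmF f p.1 * hsymmF f p.2) := by
        intro p hp
        have hsum := Finset.HasAntidiagonal.mem_antidiagonal.mp hp
        have h2 : (-1 : R) ^ p.1 * (-1) ^ p.1 = 1 := by
          rw [← pow_add, ← two_mul, pow_mul, neg_one_sq, one_pow]
        have hsign : (-1 : R) ^ p.2 = (-1 : R) ^ (n'+1) * (-1) ^ p.1 := by
          rw [← hsum, pow_add, mul_comm ((-1 : R) ^ p.1) ((-1 : R) ^ p.2), mul_assoc, h2, mul_one]
        rw [add_zero, hsign]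
        ring
      rw [Finset.sum_congr rfl key, ← Finset.mul_sum, eh_vanish m f n', mul_zero]
  | succ a IH =>
      intro n hn
      have expand : ∑ p ∈ Finset.HasAntidiagonal.antidiagonal (n+1),
          (-1 : R) ^ p.2 * esymmF f p.1 * hsymmF f (p.2+a)
          = esymmF f (n+1) * hsymmF f a
            + ∑ p ∈ Finset.HasAntidiagonal.antidiagonal n,
              -((-1 : R) ^ p.2 * esymmF f p.1 * hsymmF f (p.2+(a+1))) := by
        rw [Finset.Nat.sum_antidiagonal_succ']
        congr 1
        · simp
        · refine Finset.sum_congr rfl fun p _ => ?_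
          have h3 : p.2 + 1 + a = p.2 + (a+1) := by omega
          rw [h3]
          ring
      rw [IH (n+1) (by omega)] at expand
      rw [Finset.sum_neg_distrib] at expand
      rw [Finset.sum_range_succ']
      have hG0 : (-1 : R) ^ (0:ℕ) * esymmF f (n+1+0) * hsymmF f (a+1-1-0)
          = esymmF f (n+1) * hsymmF f a := by
        norm_num
      have hGt : ∀ t ∈ Finset.range a,
          (-1 : R) ^ (t+1) * esymmF f (n+1+(t+1)) * hsymmF f (a+1-1-(t+1))
          = -((-1 : R) ^ t * esymmF f (n+1+1+t) * hsymmF f (a-1-t)) := by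
        intro t _
        have h4 : n+1+(t+1) = n+1+1+t := by omega
        have h5 : a+1-1-(t+1) = a-1-t := by omega
        rw [h4, h5]
        ring
      rw [Finset.sum_congr rfl hGt, hG0, Finset.sum_neg_distrib]
      simp only [← add_assoc] at expand ⊢
      linear_combination expand

/-- Cauchy-type identity for single-row Grothendieck polynomials:
for `ℓ ≥ 1`, `Σ_{i+j=ℓ} (-1)^j e_i(z) G_j(z) = e_{ℓ+1}(z) - e_{ℓ+2}(z) + ⋯ ± e_k(z)`. -/
theorem cauchy_groth (k : ℕ) (hk : 1 ≤ k) (ℓ : ℕ) (hℓ : 1 ≤ ℓ) :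
    ∑ p ∈ Finset.HasAntidiagonal.antidiagonal ℓ, (-1) ^ p.2 * eP k p.1 * GP k p.2
      = ∑ m ∈ Finset.Icc (ℓ + 1) k, (-1) ^ (m - ℓ - 1) * eP k m := by
  classical
  obtain ⟨K, rfl⟩ : ∃ K, k = K + 1 := ⟨k - 1, by omega⟩
  set f : Fin (K+1) → MvPolynomial (Fin (K+1)) ℤ := fun i => X i with hf
  have heP : ∀ r, eP (K+1) r = esymmF f r := fun _ => rfl
  have hhP : ∀ r, hP (K+1) r = hsymmF f r := fun _ => rfl
  have step1 : ∑ p ∈ Finset.HasAntidiagonal.antidiagonal ℓ, (-1) ^ p.2 * eP (K+1) p.1 * GP (K+1) p.2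
      = ∑ a ∈ Finset.range (K+1+1), ∑ b ∈ Finset.range (K+1+1-a),
          ((-1) ^ b * esymmF f b)
            * ∑ p ∈ Finset.HasAntidiagonal.antidiagonal ℓ, (-1) ^ p.2 * esymmF f p.1 * hsymmF f (p.2+a) := by
    unfold GP
    simp only [Finset.mul_sum]
    rw [Finset.sum_comm]
    refine Finset.sum_congr rfl fun a _ => ?_
    rw [Finset.sum_comm]
    refine Finset.sum_congr rfl fun b _ => ?_
    refine Finset.sum_congr rfl fun p _ => ?_
    rw [heP, heP, hhP]
    ring
  rw [step1]
  have step2 : ∑ a ∈ Finset.range (K+1+1), ∑ b ∈ Finset.range (K+1+1-a),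
        ((-1) ^ b * esymmF f b)
          * ∑ p ∈ Finset.HasAntidiagonal.antidiagonal ℓ, (-1) ^ p.2 * esymmF f p.1 * hsymmF f (p.2+a)
      = ∑ a ∈ Finset.range (K+1+1), ∑ b ∈ Finset.range (K+1+1-a), ∑ t ∈ Finset.range a,
          ((-1) ^ b * esymmF f b)
            * ((-1) ^ t * esymmF f (ℓ+1+t) * hsymmF f (a-1-t)) := by
    refine Finset.sum_congr rfl fun a _ => Finset.sum_congr rfl fun b _ => ?_
    rw [Fval (K+1) f a ℓ hℓ, Finset.mul_sum]
  rw [step2]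
  have step3 : ∑ a ∈ Finset.range (K+1+1), ∑ b ∈ Finset.range (K+1+1-a), ∑ t ∈ Finset.range a,
        ((-1) ^ b * esymmF f b) * ((-1) ^ t * esymmF f (ℓ+1+t) * hsymmF f (a-1-t))
      = ∑ a ∈ Finset.range (K+1+1), ∑ t ∈ Finset.range a, ∑ b ∈ Finset.range (K+1+1-a),
          ((-1) ^ b * esymmF f b) * ((-1) ^ t * esymmF f (ℓ+1+t) * hsymmF f (a-1-t)) :=
    Finset.sum_congr rfl fun a _ => Finset.sum_comm
  rw [step3]
  rw [Finset.sum_range_succ'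
    (fun a => ∑ t ∈ Finset.range a, ∑ b ∈ Finset.range (K+1+1-a),
      ((-1) ^ b * esymmF f b) * ((-1) ^ t * esymmF f (ℓ+1+t) * hsymmF f (a-1-t))) (K+1)]
  beta_reduce
  rw [show (∑ t ∈ Finset.range 0, ∑ b ∈ Finset.range (K+1+1-0),
      ((-1 : MvPolynomial (Fin (K+1)) ℤ) ^ b * esymmF f b)
        * ((-1) ^ t * esymmF f (ℓ+1+t) * hsymmF f (0-1-t))) = 0
    from by simp, add_zero]
  have step5 : ∑ a ∈ Finset.range (K+1), ∑ t ∈ Finset.range (a+1),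
        ∑ b ∈ Finset.range (K+1+1-(a+1)),
        ((-1) ^ b * esymmF f b) * ((-1) ^ t * esymmF f (ℓ+1+t) * hsymmF f (a+1-1-t))
      = ∑ a ∈ Finset.range (K+1), ∑ p ∈ Finset.HasAntidiagonal.antidiagonal a,
          ∑ b ∈ Finset.range (K+1-(p.1+p.2)),
          ((-1) ^ b * esymmF f b) * ((-1) ^ p.1 * esymmF f (ℓ+1+p.1) * hsymmF f p.2) := by
    refine Finset.sum_congr rfl fun a _ => ?_
    rw [Finset.Nat.sum_antidiagonal_eq_sum_range_succ_mk
      (fun p => ∑ b ∈ Finset.range (K+1-(p.1+p.2)),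
        ((-1 : MvPolynomial (Fin (K+1)) ℤ) ^ b * esymmF f b)
          * ((-1) ^ p.1 * esymmF f (ℓ+1+p.1) * hsymmF f p.2)) a]
    beta_reduce
    refine Finset.sum_congr rfl fun t ht => ?_
    rw [Finset.mem_range] at ht
    have h1 : K+1 - (t + (a - t)) = K+1+1-(a+1) := by omega
    have h2 : a + 1 - 1 - t = a - t := by omega
    rw [h1, h2]
  rw [step5]
  have step6 : ∑ t ∈ Finset.range (K+1), ∑ s ∈ Finset.range (K+1-t),
        ∑ b ∈ Finset.range (K+1-(t+s)),
          ((-1 : MvPolynomial (Fin (K+1)) ℤ) ^ b * esymmF f b)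
            * ((-1) ^ t * esymmF f (ℓ+1+t) * hsymmF f s)
      = ∑ a ∈ Finset.range (K+1), ∑ p ∈ Finset.HasAntidiagonal.antidiagonal a,
          ∑ b ∈ Finset.range (K+1-(p.1+p.2)),
          ((-1) ^ b * esymmF f b) * ((-1) ^ p.1 * esymmF f (ℓ+1+p.1) * hsymmF f p.2) :=
    tri_sum _ K
  rw [← step6]
  have step7 : ∑ t ∈ Finset.range (K+1), ∑ s ∈ Finset.range (K+1-t),
        ∑ b ∈ Finset.range (K+1-(t+s)),
          ((-1 : MvPolynomial (Fin (K+1)) ℤ) ^ b * esymmF f b)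
            * ((-1) ^ t * esymmF f (ℓ+1+t) * hsymmF f s)
      = ∑ t ∈ Finset.range (K+1), (-1) ^ t * esymmF f (ℓ+1+t) := by
    refine Finset.sum_congr rfl fun t ht => ?_
    rw [Finset.mem_range] at ht
    have factored : ∀ s ∈ Finset.range (K+1-t), ∑ b ∈ Finset.range (K+1-(t+s)),
        ((-1 : MvPolynomial (Fin (K+1)) ℤ) ^ b * esymmF f b)
          * ((-1) ^ t * esymmF f (ℓ+1+t) * hsymmF f s)
        = ((-1) ^ t * esymmF f (ℓ+1+t))
            * ∑ b ∈ Finset.range (K-t+1-s), (-1) ^ b * esymmF f b * hsymmF f s := by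
      intro s _
      rw [Finset.mul_sum]
      have h3 : K+1-(t+s) = K-t+1-s := by omega
      rw [h3]
      refine Finset.sum_congr rfl fun b _ => ?_
      ring
    rw [Finset.sum_congr rfl factored, ← Finset.mul_sum]
    have h4 : K+1-t = K-t+1 := by omega
    rw [h4, Dval (K+1) f (K-t), mul_one]
  rw [step7]
  have hsub : Finset.range (K+1-ℓ) ⊆ Finset.range (K+1) :=
    Finset.range_subset_range.mpr (by omega)
  have hzero : ∀ t ∈ Finset.range (K+1), t ∉ Finset.range (K+1-ℓ) →
      (-1 : MvPolynomial (Fin (K+1)) ℤ) ^ t * esymmF f (ℓ+1+t) = 0 := by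
    intro t ht1 ht2
    simp only [Finset.mem_range] at ht1 ht2
    rw [esymmF_eq_zero f (ℓ+1+t) (by omega), mul_zero]
  rw [← Finset.sum_subset hsub hzero]
  refine Finset.sum_nbij' (i := fun t => ℓ+1+t) (j := fun m => m - ℓ - 1)
    ?_ ?_ ?_ ?_ ?_
  · intro t ht
    beta_reduce
    rw [Finset.mem_range] at ht
    rw [Finset.mem_Icc]
    omega
  · intro m hm
    beta_reduce
    rw [Finset.mem_Icc] at hm
    rw [Finset.mem_range]
    omega
  · intro t _
    beta_reduce
    omega
  · intro m hm
    beta_reduce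
    rw [Finset.mem_Icc] at hm
    omega
  · intro t _
    beta_reduce
    rw [show ℓ + 1 + t - ℓ - 1 = t from by omega, heP]

end
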